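/- Fix T > 0 and L ≥ 1, and let G be the periodic heat kernel on [0,L]. Then for all s, t ∈ (0,T] and x, y ∈ [0,L], ∫_0^L G_t(x,z)² G_s(z,y)² dz ≤ √((t+s)/(4πst)) · ϑ(1/(2Tπ)) · G_{t+s}(x,y)², where ϑ(r) = ∑_{n∈ℤ} e^{−π n² r} is the Jacobi theta function. -/

import Mathlib

open Real MeasureTheory

noncomputable def p (t x : ℝ) : ℝ :=
  (Real.sqrt (2 * Real.pi * t))⁻¹ * Real.exp (-x ^ 2 / (2 * t))

/-- Periodic heat kernel on `[0, L]`. -/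
noncomputable def GP (L t x y : ℝ) : ℝ :=
  ∑' n : ℤ, p t (x - y + n * L)

/-- Jacobi theta function. -/
noncomputable def theta (r : ℝ) : ℝ :=
  ∑' n : ℤ, Real.exp (-Real.pi * n ^ 2 * r)

open scoped ENNReal

section Aux

lemma p_nonneg (t u : ℝ) : 0 ≤ p t u :=
  mul_nonneg (inv_nonneg.mpr (Real.sqrt_nonneg _)) (Real.exp_pos _).le

lemma continuous_p (t : ℝ) : Continuous (p t) := by unfold p; fun_prop

lemma summable_gauss' {c : ℝ} (hc : 0 < c) (φ : ℝ) :
    Summable (fun n : ℤ => Real.exp (-c * ((n : ℝ) + φ) ^ 2)) := by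
  have ht : 0 < c / Real.pi := div_pos hc Real.pi_pos
  have h := HurwitzKernelBounds.summable_f_int 0 φ ht
  refine h.congr fun n => ?_
  simp only [HurwitzKernelBounds.f_int, pow_zero, one_mul]
  rw [show -Real.pi * ((n : ℝ) + φ) ^ 2 * (c / Real.pi) = -c * ((n : ℝ) + φ) ^ 2 by
    field_simp]

lemma summable_p {t L : ℝ} (ht : 0 < t) (hL : 0 < L) (d : ℝ) :
    Summable (fun n : ℤ => p t (d + n * L)) := by
  have hc : 0 < L ^ 2 / (2 * t) := by positivity
  have h := (summable_gauss' hc (d / L)).mul_left (Real.sqrt (2 * Real.pi * t))⁻¹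
  refine h.congr fun n => ?_
  rw [p]
  congr 1
  rw [Real.exp_eq_exp]
  have : d + n * L = ((n : ℝ) + d / L) * L := by field_simp; ring
  rw [this]
  field_simp

lemma gauss_shift_le {c : ℝ} (hc : 0 < c) (φ : ℝ) :
    (∑' n : ℤ, Real.exp (-c * ((n:ℝ) + φ) ^ 2)) ≤ ∑' n : ℤ, Real.exp (-c * (n:ℝ) ^ 2) := by
  have hπ := Real.pi_pos
  set a : ℝ := c / π with ha_def
  have ha : 0 < a := div_pos hc hπ
  set b : ℝ := -(c * φ) / π with hb_def
  set g : ℤ → ℝ := fun n => Real.exp (-c * (n:ℝ)^2 - 2*c*φ*(n:ℝ)) with hg_def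
  have h1 : ∀ n : ℤ, Real.exp (-c * ((n:ℝ) + φ) ^ 2) = Real.exp (-(c*φ^2)) * g n := by
    intro n
    rw [hg_def, ← Real.exp_add]
    congr 1
    ring
  have hSg : Summable g := by
    have := (summable_gauss' hc φ).mul_left (Real.exp (c*φ^2))
    refine this.congr fun n => ?_
    rw [hg_def, ← Real.exp_add]
    congr 1
    ring
  have hS1 : (∑' n : ℤ, Real.exp (-c * ((n:ℝ) + φ) ^ 2)) = Real.exp (-(c*φ^2)) * ∑' n, g n := by
    rw [← tsum_mul_left]; exact tsum_congr h1
  have haC : 0 < ((a : ℂ)).re := by simpa using ha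
  have hformula := Complex.tsum_exp_neg_quadratic haC ((b : ℝ) : ℂ)
  have hLHS : (∑' n : ℤ, Complex.exp (-(π:ℂ) * (a:ℂ) * (n:ℂ) ^ 2 + 2 * (π:ℂ) * (b:ℂ) * (n:ℂ)))
      = ((∑' n, g n : ℝ) : ℂ) := by
    rw [Complex.ofReal_tsum]
    refine tsum_congr fun n => ?_
    show _ = ((Real.exp (-c * (n:ℝ)^2 - 2*c*φ*(n:ℝ)) : ℝ) : ℂ)
    rw [Complex.ofReal_exp]
    congr 1
    have hπC : (π:ℂ) ≠ 0 := by exact_mod_cast hπ.ne'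
    rw [ha_def, hb_def]
    push_cast
    field_simp
    ring
  rw [hLHS] at hformula
  have hdualsum : Summable fun n : ℤ => Real.exp (-(π^2/c) * (n:ℝ) ^ 2) := by
    have := summable_gauss' (c := π^2/c) (by positivity) 0
    simpa using this
  have hnorm_term : ∀ n : ℤ,
      ‖Complex.exp (-(π:ℂ) / (a:ℂ) * ((n:ℂ) + Complex.I * (b:ℂ)) ^ 2)‖
        = Real.exp (c*φ^2) * Real.exp (-(π^2/c) * (n:ℝ) ^ 2) := by
    intro n
    have hw : -(π:ℂ) / (a:ℂ) * ((n:ℂ) + Complex.I * (b:ℂ)) ^ 2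
        = ((-(π/a) * ((n:ℝ)^2 - b^2) : ℝ) : ℂ) + ((-(π/a) * (2*(n:ℝ)*b) : ℝ) : ℂ) * Complex.I := by
      have ha0 : (a:ℂ) ≠ 0 := by exact_mod_cast ha.ne'
      field_simp
      ring_nf
      rw [Complex.I_sq]
      push_cast
      ring_nf
      field_simp
    rw [Complex.norm_exp, hw]
    have : (((-(π/a) * ((n:ℝ)^2 - b^2) : ℝ) : ℂ) + ((-(π/a) * (2*(n:ℝ)*b) : ℝ) : ℂ) * Complex.I).re
        = -(π/a) * ((n:ℝ)^2 - b^2) := by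
      simp only [Complex.add_re, Complex.ofReal_re, Complex.mul_re, Complex.I_re, Complex.I_im,
        Complex.ofReal_im]
      ring
    rw [this, ← Real.exp_add]
    congr 1
    have hπa : π / a = π^2 / c := by rw [ha_def]; field_simp
    rw [hπa, hb_def]
    field_simp
    ring
  have hdual2 : Summable fun n : ℤ =>
      ‖Complex.exp (-(π:ℂ) / (a:ℂ) * ((n:ℂ) + Complex.I * (b:ℂ)) ^ 2)‖ := by
    refine (hdualsum.mul_left (Real.exp (c*φ^2))).congr fun n => ?_
    rw [hnorm_term n]
  have hnorm_cpow : ‖1 / (a:ℂ) ^ (1/2 : ℂ)‖ = 1 / a ^ (1/2 : ℝ) := by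
    rw [norm_div, norm_one, Complex.norm_cpow_eq_rpow_re_of_pos ha]
    norm_num
  have hbound : (∑' n, g n) ≤ (1 / a ^ (1/2:ℝ)) * (Real.exp (c*φ^2) * ∑' n : ℤ, Real.exp (-(π^2/c) * (n:ℝ) ^ 2)) := by
    have h0 : (∑' n, g n) ≤ ‖((∑' n, g n : ℝ) : ℂ)‖ := by
      rw [Complex.norm_real]
      exact le_abs_self _
    refine h0.trans ?_
    rw [hformula, norm_mul, hnorm_cpow]
    refine mul_le_mul_of_nonneg_left ?_ (by positivity)
    refine (norm_tsum_le_tsum_norm hdual2).trans_eq ?_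
    rw [← tsum_mul_left]
    exact tsum_congr fun n => hnorm_term n
  have hRHS : (∑' n : ℤ, Real.exp (-c * (n:ℝ) ^ 2))
      = (1 / a ^ (1/2:ℝ)) * ∑' n : ℤ, Real.exp (-(π^2/c) * (n:ℝ) ^ 2) := by
    have h := Real.tsum_exp_neg_mul_int_sq ha
    have e1 : ∀ n : ℤ, Real.exp (-π * a * (n:ℝ) ^ 2) = Real.exp (-c * (n:ℝ) ^ 2) := by
      intro n; congr 1; rw [ha_def]; field_simp
    have e2 : ∀ n : ℤ, Real.exp (-π / a * (n:ℝ) ^ 2) = Real.exp (-(π^2/c) * (n:ℝ) ^ 2) := by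
      intro n; congr 1
      rw [show -π / a = -(π^2/c) by rw [ha_def, neg_div, div_div_eq_mul_div, ← sq]]
    rw [tsum_congr e1] at h
    rw [tsum_congr e2] at h
    exact h
  rw [hS1, hRHS]
  calc Real.exp (-(c*φ^2)) * ∑' n, g n
      ≤ Real.exp (-(c*φ^2)) * ((1 / a ^ (1/2:ℝ)) * (Real.exp (c*φ^2) * ∑' n : ℤ, Real.exp (-(π^2/c) * (n:ℝ) ^ 2))) :=
        mul_le_mul_of_nonneg_left hbound (Real.exp_pos _).le
    _ = (Real.exp (-(c*φ^2)) * Real.exp (c*φ^2)) * ((1 / a ^ (1/2:ℝ)) * ∑' n : ℤ, Real.exp (-(π^2/c) * (n:ℝ) ^ 2)) := by ring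
    _ = (1 / a ^ (1/2:ℝ)) * ∑' n : ℤ, Real.exp (-(π^2/c) * (n:ℝ) ^ 2) := by
        rw [← Real.exp_add, neg_add_cancel, Real.exp_zero, one_mul]

lemma key_scalar {c c' : ℝ} (hc' : 0 < c') (hcc : c' ≤ c) (φ : ℝ) :
    (∑' n : ℤ, Real.exp (-c * ((n:ℝ) + φ) ^ 2)) ≤ ∑' n : ℤ, Real.exp (-c' * (n:ℝ) ^ 2) := by
  have hc : 0 < c := hc'.trans_le hcc
  refine le_trans (Summable.tsum_le_tsum (fun n => ?_) (summable_gauss' hc φ) (summable_gauss' hc' φ))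
    (gauss_shift_le hc' φ)
  exact Real.exp_le_exp.mpr (by nlinarith [sq_nonneg ((n:ℝ)+φ)])

lemma theta_bound {c T : ℝ} (hT : 0 < T) (hc : (2*T)⁻¹ ≤ c) (φ : ℝ) :
    (∑' m : ℤ, Real.exp (-c * ((m:ℝ) + φ) ^ 2)) ≤ theta (1/(2*T*π)) := by
  have hπ := Real.pi_pos
  rw [theta]
  have e : ∀ n : ℤ, Real.exp (-Real.pi * (n:ℝ) ^ 2 * (1/(2*T*π))) = Real.exp (-(2*T)⁻¹ * (n:ℝ)^2) := by
    intro n; congr 1; field_simp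
  rw [tsum_congr e]
  exact key_scalar (by positivity) hc φ

lemma p_mul_p {t : ℝ} (ht : 0 < t) (d c : ℝ) :
    p t d * p t (d + c) =
      (Real.sqrt (4 * π * t))⁻¹ * Real.exp (-c^2 / (4*t)) * p (t/2) (d + c/2) := by
  have h1 : Real.sqrt (2*π*t) * Real.sqrt (2*π*t) = 2*π*t := Real.mul_self_sqrt (by positivity)
  have h2 : Real.sqrt (4*π*t) * Real.sqrt (2*π*(t/2)) = 2*π*t := by
    rw [← Real.sqrt_mul (by positivity)]
    rw [show (4*π*t)*(2*π*(t/2)) = (2*π*t)^2 by ring]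
    exact Real.sqrt_sq (by positivity)
  have e1 : Real.exp (-d^2/(2*t)) * Real.exp (-(d+c)^2/(2*t))
      = Real.exp (-c^2/(4*t)) * Real.exp (-(d+c/2)^2/(2*(t/2))) := by
    rw [← Real.exp_add, ← Real.exp_add]
    congr 1
    field_simp
    ring
  calc p t d * p t (d+c)
      = (Real.sqrt (2*π*t) * Real.sqrt (2*π*t))⁻¹ *
        (Real.exp (-d^2/(2*t)) * Real.exp (-(d+c)^2/(2*t))) := by
        rw [p, p, mul_inv]; ring
    _ = (2*π*t)⁻¹ * (Real.exp (-c^2/(4*t)) * Real.exp (-(d+c/2)^2/(2*(t/2)))) := by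
        rw [h1, e1]
    _ = (Real.sqrt (4 * π * t))⁻¹ * Real.exp (-c^2 / (4*t)) * p (t/2) (d + c/2) := by
        rw [p, ← h2, mul_inv]; ring

lemma conv_integrable {t s : ℝ} (ht : 0 < t) (hs : 0 < s) (A B : ℝ) :
    Integrable (fun w : ℝ => p t (A - w) * p s (w - B)) := by
  have hb : 0 < (t+s)/(2*t*s) := by positivity
  set b := (t+s)/(2*t*s) with hbd
  set w0 := (s*A+t*B)/(t+s) with hw0
  set C := (Real.sqrt (2*π*t))⁻¹ * (Real.sqrt (2*π*s))⁻¹ * Real.exp (-(A-B)^2/(2*(t+s))) with hC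
  have hpt : ∀ w : ℝ, p t (A - w) * p s (w - B) = C * Real.exp (-b * (w - w0)^2) := by
    intro w
    rw [p, p, hC]
    rw [show (Real.sqrt (2*π*t))⁻¹ * Real.exp (-(A-w)^2/(2*t)) * ((Real.sqrt (2*π*s))⁻¹ * Real.exp (-(w-B)^2/(2*s)))
      = (Real.sqrt (2*π*t))⁻¹ * (Real.sqrt (2*π*s))⁻¹ * (Real.exp (-(A-w)^2/(2*t)) * Real.exp (-(w-B)^2/(2*s))) by ring]
    rw [show (Real.sqrt (2*π*t))⁻¹ * (Real.sqrt (2*π*s))⁻¹ * Real.exp (-(A-B)^2/(2*(t+s))) * Real.exp (-b*(w-w0)^2)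
      = (Real.sqrt (2*π*t))⁻¹ * (Real.sqrt (2*π*s))⁻¹ * (Real.exp (-(A-B)^2/(2*(t+s))) * Real.exp (-b*(w-w0)^2)) by ring]
    congr 1
    rw [← Real.exp_add, ← Real.exp_add]
    congr 1
    rw [hbd, hw0]
    field_simp
    ring
  have : Integrable (fun w : ℝ => C * Real.exp (-b * (w - w0)^2)) := by
    exact ((integrable_exp_neg_mul_sq hb).comp_sub_right w0).const_mul C
  exact this.congr (Filter.EventuallyEq.of_eq (funext fun w => (hpt w).symm))

lemma conv_p {t s : ℝ} (ht : 0 < t) (hs : 0 < s) (A B : ℝ) :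
    (∫ w : ℝ, p t (A - w) * p s (w - B)) = p (t+s) (A - B) := by
  have hb : 0 < (t+s)/(2*t*s) := by positivity
  set b := (t+s)/(2*t*s) with hbd
  set w0 := (s*A+t*B)/(t+s) with hw0
  set C := (Real.sqrt (2*π*t))⁻¹ * (Real.sqrt (2*π*s))⁻¹ * Real.exp (-(A-B)^2/(2*(t+s))) with hC
  have hpt : ∀ w : ℝ, p t (A - w) * p s (w - B) = C * Real.exp (-b * (w - w0)^2) := by
    intro w
    rw [p, p, hC]
    rw [show (Real.sqrt (2*π*t))⁻¹ * Real.exp (-(A-w)^2/(2*t)) * ((Real.sqrt (2*π*s))⁻¹ * Real.exp (-(w-B)^2/(2*s)))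
      = (Real.sqrt (2*π*t))⁻¹ * (Real.sqrt (2*π*s))⁻¹ * (Real.exp (-(A-w)^2/(2*t)) * Real.exp (-(w-B)^2/(2*s))) by ring]
    rw [show (Real.sqrt (2*π*t))⁻¹ * (Real.sqrt (2*π*s))⁻¹ * Real.exp (-(A-B)^2/(2*(t+s))) * Real.exp (-b*(w-w0)^2)
      = (Real.sqrt (2*π*t))⁻¹ * (Real.sqrt (2*π*s))⁻¹ * (Real.exp (-(A-B)^2/(2*(t+s))) * Real.exp (-b*(w-w0)^2)) by ring]
    congr 1
    rw [← Real.exp_add, ← Real.exp_add]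
    congr 1
    rw [hbd, hw0]
    field_simp
    ring
  rw [integral_congr_ae (Filter.EventuallyEq.of_eq (funext hpt))]
  rw [MeasureTheory.integral_const_mul]
  rw [integral_sub_right_eq_self (μ := volume) (fun w : ℝ => Real.exp (-b * w^2)) w0]
  rw [integral_gaussian]
  rw [p, hC]
  rw [show (Real.sqrt (2*π*t))⁻¹ * (Real.sqrt (2*π*s))⁻¹ * Real.exp (-(A-B)^2/(2*(t+s))) * Real.sqrt (π/b)
    = ((Real.sqrt (2*π*t))⁻¹ * (Real.sqrt (2*π*s))⁻¹ * Real.sqrt (π/b)) * Real.exp (-(A-B)^2/(2*(t+s))) by ring]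
  congr 1
  rw [← Real.sqrt_inv, ← Real.sqrt_inv, ← Real.sqrt_mul (by positivity), ← Real.sqrt_mul (by positivity), ← Real.sqrt_inv]
  congr 1
  rw [hbd]
  field_simp

lemma lintegral_periodize {L : ℝ} (hL : 0 < L) (g : ℝ → ℝ≥0∞) :
    ∑' j : ℤ, ∫⁻ z in Set.Ioc 0 L, g (z - j * L) = ∫⁻ w, g w := by
  set F : ℤ → ℝ≥0∞ := fun b => ∫⁻ w in Set.Ioc ((b:ℝ) * L) ((b:ℝ) * L + L), g w with hF
  have step1 : ∀ j : ℤ, (∫⁻ z in Set.Ioc 0 L, g (z - j * L)) = F (-j) := by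
    intro j
    show _ = ∫⁻ w in Set.Ioc (((-j:ℤ):ℝ) * L) (((-j:ℤ):ℝ) * L + L), g w
    rw [← lintegral_indicator (μ := volume) measurableSet_Ioc,
        ← lintegral_indicator (μ := volume) measurableSet_Ioc]
    have key : ∀ z : ℝ, (Set.Ioc 0 L).indicator (fun z => g (z - j * L)) z
        = (Set.Ioc (((-j:ℤ):ℝ) * L) (((-j:ℤ):ℝ) * L + L)).indicator g (z + (-(j * L))) := by
      intro z
      have hmem : z ∈ Set.Ioc 0 L ↔ z + (-(j * L)) ∈ Set.Ioc (((-j:ℤ):ℝ) * L) (((-j:ℤ):ℝ) * L + L) := by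
        simp only [Set.mem_Ioc]
        push_cast
        constructor <;> intro h <;> constructor <;> linarith [h.1, h.2]
      rw [Set.indicator_apply, Set.indicator_apply, if_congr hmem rfl rfl]
      rw [sub_eq_add_neg]
    rw [lintegral_congr key]
    exact lintegral_add_right_eq_self
      (fun w => (Set.Ioc (((-j:ℤ):ℝ) * L) (((-j:ℤ):ℝ) * L + L)).indicator g w) (-(j * L))
  rw [tsum_congr step1]
  have hneg : ∑' (b:ℤ), F (-b) = ∑' b, F b := (Equiv.neg ℤ).tsum_eq F
  rw [hneg, hF]
  rw [← lintegral_iUnion (fun j : ℤ => measurableSet_Ioc) ?_ g]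
  · have : (⋃ j : ℤ, Set.Ioc ((j:ℝ) * L) ((j:ℝ) * L + L)) = Set.univ := by
      ext w
      simp only [Set.mem_iUnion, Set.mem_Ioc, Set.mem_univ, iff_true]
      refine ⟨⌈w / L⌉ - 1, ?_, ?_⟩
      · push_cast
        have := Int.ceil_lt_add_one (w / L)
        have h2 : (⌈w / L⌉ - 1 : ℝ) < w / L := by linarith
        calc ((⌈w / L⌉:ℝ) - 1) * L < w / L * L := mul_lt_mul_of_pos_right h2 hL
          _ = w := by field_simp
      · push_cast
        have h1 := Int.le_ceil (w / L)
        have h2 : w / L * L ≤ (⌈w / L⌉:ℝ) * L := mul_le_mul_of_nonneg_right h1 hL.le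
        calc w = w / L * L := by field_simp
          _ ≤ (⌈w / L⌉:ℝ) * L := h2
          _ = ((⌈w / L⌉:ℝ) - 1) * L + L := by ring
    rw [this, Measure.restrict_univ]
  · intro i k hik
    simp only [Function.onFun]
    rw [Set.Ioc_disjoint_Ioc]
    rcases lt_or_gt_of_ne hik with h | h
    · have : (i:ℝ) + 1 ≤ (k:ℝ) := by exact_mod_cast Int.add_one_le_of_lt h
      refine le_trans (min_le_left _ _) (le_trans ?_ (le_max_right _ _))
      nlinarith
    · have : (k:ℝ) + 1 ≤ (i:ℝ) := by exact_mod_cast Int.add_one_le_of_lt h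
      refine le_trans (min_le_right _ _) (le_trans ?_ (le_max_left _ _))
      nlinarith

lemma tsum_mul_tsum_ennreal {ι κ : Type*} (A : ι → ℝ≥0∞) (B : κ → ℝ≥0∞) :
    (∑' i, A i) * (∑' j, B j) = ∑' q : ι × κ, A q.1 * B q.2 := by
  rw [ENNReal.tsum_prod']
  rw [← ENNReal.tsum_mul_right]
  exact tsum_congr fun i => (ENNReal.tsum_mul_left).symm

def e4 : (ℤ × ℤ × ℤ) × ℤ ≃ (ℤ × ℤ) × ℤ × ℤ where
  toFun r := ((r.2, r.2 + r.1.1), (r.1.2.1 - r.2, r.1.2.2 - r.2))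
  invFun q := ((q.1.2 - q.1.1, q.2.1 + q.1.1, q.2.2 + q.1.1), q.1.1)
  left_inv := by rintro ⟨⟨m, a, b⟩, j⟩; simp [Prod.ext_iff]
  right_inv := by rintro ⟨⟨n1, n2⟩, n3, n4⟩; simp [Prod.ext_iff]

def eL : ℤ × ℤ × ℤ ≃ ℤ × ℤ × ℤ where
  toFun r := (r.2.1, r.2.2, r.1 - r.2.1 - r.2.2)
  invFun u := (u.1 + u.2.1 + u.2.2, u.1, u.2.1)
  left_inv := by rintro ⟨v, m, a⟩; simp [Prod.ext_iff]
  right_inv := by rintro ⟨m, a, b⟩; simp [Prod.ext_iff]; ring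

def eR : ℤ × ℤ ≃ ℤ × ℤ where
  toFun r := (r.2, r.1 - r.2)
  invFun u := (u.1 + u.2, u.1)
  left_inv := by rintro ⟨v, n⟩; simp [Prod.ext_iff]
  right_inv := by rintro ⟨n1, n2⟩; simp [Prod.ext_iff]

lemma ofReal_GP {t L : ℝ} (ht : 0 < t) (hL : 0 < L) (u v : ℝ) :
    ENNReal.ofReal (GP L t u v) = ∑' n : ℤ, ENNReal.ofReal (p t (u - v + n * L)) := by
  rw [GP, ENNReal.ofReal_tsum_of_nonneg (fun n => p_nonneg _ _) (summable_p ht hL _)]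

lemma GP_nonneg (L t u v : ℝ) : 0 ≤ GP L t u v := tsum_nonneg fun n => p_nonneg _ _

lemma L1 {t s L : ℝ} (ht0 : 0 < t) (hs0 : 0 < s) (hL0 : 0 < L) (x y : ℝ) :
    (∫⁻ z in Set.Ioc (0:ℝ) L, ENNReal.ofReal ((GP L t x z)^2 * (GP L s z y)^2))
      = ∑' mab : ℤ × ℤ × ℤ, ∫⁻ w : ℝ, ENNReal.ofReal
          (p t (x - w) * p t (x - w + (mab.1 : ℝ) * L) *
           (p s (w - y + (mab.2.1 : ℝ) * L) * p s (w - y + (mab.2.2 : ℝ) * L))) := by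
  have hexp : ∀ z : ℝ, ENNReal.ofReal ((GP L t x z)^2 * (GP L s z y)^2)
      = ∑' Q : (ℤ × ℤ) × ℤ × ℤ,
          (ENNReal.ofReal (p t (x - z + Q.1.1 * L)) * ENNReal.ofReal (p t (x - z + Q.1.2 * L))) *
          (ENNReal.ofReal (p s (z - y + Q.2.1 * L)) * ENNReal.ofReal (p s (z - y + Q.2.2 * L))) := by
    intro z
    rw [pow_two, pow_two, ENNReal.ofReal_mul (mul_nonneg (GP_nonneg _ _ _ _) (GP_nonneg _ _ _ _)),
        ENNReal.ofReal_mul (GP_nonneg _ _ _ _), ENNReal.ofReal_mul (GP_nonneg _ _ _ _),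
        ofReal_GP ht0 hL0, ofReal_GP hs0 hL0,
        tsum_mul_tsum_ennreal, tsum_mul_tsum_ennreal, tsum_mul_tsum_ennreal]
  rw [lintegral_congr hexp]
  rw [lintegral_tsum (fun Q => Measurable.aemeasurable (by
    apply Measurable.fun_mul <;> apply Measurable.fun_mul <;>
      exact ((continuous_p _).comp (by continuity)).measurable.ennreal_ofReal))]
  rw [← e4.tsum_eq, ENNReal.tsum_prod']
  refine tsum_congr fun mab => ?_
  obtain ⟨m, a, b⟩ := mab
  have hpt : ∀ (j : ℤ) (z : ℝ),
      (ENNReal.ofReal (p t (x - z + (j:ℝ) * L)) * ENNReal.ofReal (p t (x - z + ((j + m : ℤ):ℝ) * L))) *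
      (ENNReal.ofReal (p s (z - y + ((a - j : ℤ):ℝ) * L)) * ENNReal.ofReal (p s (z - y + ((b - j : ℤ):ℝ) * L)))
      = ENNReal.ofReal
          (p t (x - (z - (j:ℝ) * L)) * p t (x - (z - (j:ℝ) * L) + (m : ℝ) * L) *
           (p s ((z - (j:ℝ) * L) - y + (a : ℝ) * L) * p s ((z - (j:ℝ) * L) - y + (b : ℝ) * L))) := by
    intro j z
    rw [← ENNReal.ofReal_mul (p_nonneg _ _), ← ENNReal.ofReal_mul (p_nonneg _ _),
        ← ENNReal.ofReal_mul (mul_nonneg (p_nonneg _ _) (p_nonneg _ _))]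
    congr 2 <;> push_cast <;> ring_nf
  calc ∑' j : ℤ, ∫⁻ z in Set.Ioc (0:ℝ) L,
        ((ENNReal.ofReal (p t (x - z + ((e4 ((m,a,b),j)).1.1 :ℝ) * L)) *
          ENNReal.ofReal (p t (x - z + ((e4 ((m,a,b),j)).1.2 :ℝ) * L))) *
         (ENNReal.ofReal (p s (z - y + ((e4 ((m,a,b),j)).2.1 :ℝ) * L)) *
          ENNReal.ofReal (p s (z - y + ((e4 ((m,a,b),j)).2.2 :ℝ) * L))))
      = ∑' j : ℤ, ∫⁻ z in Set.Ioc (0:ℝ) L,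
          (fun w => ENNReal.ofReal
            (p t (x - w) * p t (x - w + (m : ℝ) * L) *
             (p s (w - y + (a : ℝ) * L) * p s (w - y + (b : ℝ) * L)))) (z - (j:ℝ) * L) := by
        refine tsum_congr fun j => lintegral_congr fun z => ?_
        exact hpt j z
    _ = ∫⁻ w : ℝ, ENNReal.ofReal
          (p t (x - w) * p t (x - w + (m : ℝ) * L) *
           (p s (w - y + (a : ℝ) * L) * p s (w - y + (b : ℝ) * L))) :=
        lintegral_periodize hL0 (fun w => ENNReal.ofReal
          (p t (x - w) * p t (x - w + (m : ℝ) * L) *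
           (p s (w - y + (a : ℝ) * L) * p s (w - y + (b : ℝ) * L))))

lemma L2 {t s L : ℝ} (ht0 : 0 < t) (hs0 : 0 < s) (x y : ℝ) (m a b : ℤ) :
    (∫⁻ w : ℝ, ENNReal.ofReal
        (p t (x - w) * p t (x - w + (m : ℝ) * L) *
         (p s (w - y + (a : ℝ) * L) * p s (w - y + (b : ℝ) * L))))
      = ENNReal.ofReal ((Real.sqrt (4*π*t))⁻¹ * (Real.sqrt (4*π*s))⁻¹ *
          (Real.exp (-((m:ℝ)*L)^2/(4*t)) * Real.exp (-(((b - a : ℤ):ℝ)*L)^2/(4*s))) *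
          p ((t+s)/2) ((x - y) + ((m + a + b : ℤ):ℝ)*(L/2))) := by
  have ht2 : 0 < t/2 := by positivity
  have hs2 : 0 < s/2 := by positivity
  set C : ℝ := (Real.sqrt (4*π*t))⁻¹ * (Real.sqrt (4*π*s))⁻¹ *
      (Real.exp (-((m:ℝ)*L)^2/(4*t)) * Real.exp (-(((b:ℝ) - (a:ℝ))*L)^2/(4*s))) with hC
  have hC0 : 0 ≤ C := by
    rw [hC]; positivity
  set A : ℝ := x + (m:ℝ)*L/2 with hA
  set B : ℝ := y - (a:ℝ)*L - ((b:ℝ)-(a:ℝ))*L/2 with hB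
  have hptw : ∀ w : ℝ, p t (x - w) * p t (x - w + (m:ℝ)*L) *
      (p s (w - y + (a:ℝ)*L) * p s (w - y + (b:ℝ)*L))
      = C * (p (t/2) (A - w) * p (s/2) (w - B)) := by
    intro w
    have h1 := p_mul_p ht0 (x - w) ((m:ℝ)*L)
    have h2 := p_mul_p hs0 (w - y + (a:ℝ)*L) (((b:ℝ)-(a:ℝ))*L)
    rw [show w - y + (b:ℝ)*L = (w - y + (a:ℝ)*L) + ((b:ℝ)-(a:ℝ))*L by ring]
    rw [h1, h2]
    rw [show x - w + (m:ℝ)*L/2 = A - w by rw [hA]; ring]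
    rw [show w - y + (a:ℝ)*L + ((b:ℝ)-(a:ℝ))*L/2 = w - B by rw [hB]; ring]
    rw [hC]
    ring
  calc (∫⁻ w : ℝ, ENNReal.ofReal
        (p t (x - w) * p t (x - w + (m : ℝ) * L) *
         (p s (w - y + (a : ℝ) * L) * p s (w - y + (b : ℝ) * L))))
      = ∫⁻ w : ℝ, ENNReal.ofReal C * ENNReal.ofReal (p (t/2) (A - w) * p (s/2) (w - B)) := by
        refine lintegral_congr fun w => ?_
        rw [hptw w, ENNReal.ofReal_mul hC0]
    _ = ENNReal.ofReal C * ∫⁻ w : ℝ, ENNReal.ofReal (p (t/2) (A - w) * p (s/2) (w - B)) := by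
        refine lintegral_const_mul _ ?_
        exact (((continuous_p _).comp (by continuity)).mul
          ((continuous_p _).comp (by continuity))).measurable.ennreal_ofReal
    _ = ENNReal.ofReal C * ENNReal.ofReal (∫ w : ℝ, p (t/2) (A - w) * p (s/2) (w - B)) := by
        rw [ofReal_integral_eq_lintegral_ofReal (conv_integrable ht2 hs2 A B)
          (Filter.Eventually.of_forall fun w => mul_nonneg (p_nonneg _ _) (p_nonneg _ _))]
    _ = ENNReal.ofReal C * ENNReal.ofReal (p ((t+s)/2) (A - B)) := by
        rw [conv_p ht2 hs2 A B, show t/2 + s/2 = (t+s)/2 by ring]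
    _ = ENNReal.ofReal ((Real.sqrt (4*π*t))⁻¹ * (Real.sqrt (4*π*s))⁻¹ *
          (Real.exp (-((m:ℝ)*L)^2/(4*t)) * Real.exp (-(((b - a : ℤ):ℝ)*L)^2/(4*s))) *
          p ((t+s)/2) ((x - y) + ((m + a + b : ℤ):ℝ)*(L/2))) := by
        rw [← ENNReal.ofReal_mul hC0]
        rw [show A - B = (x - y) + ((m + a + b : ℤ):ℝ)*(L/2) by rw [hA, hB]; push_cast; ring]
        rw [hC]
        push_cast
        ring_nf

lemma L3 {τ L : ℝ} (hτ0 : 0 < τ) (hL0 : 0 < L) (x y : ℝ) :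
    ENNReal.ofReal ((GP L τ x y)^2) = ∑' nm : ℤ × ℤ,
      ENNReal.ofReal ((Real.sqrt (4*π*τ))⁻¹ * Real.exp (-(((nm.2 - nm.1 : ℤ):ℝ)*L)^2/(4*τ)) *
        p (τ/2) ((x - y) + ((nm.1 + nm.2 : ℤ):ℝ)*(L/2))) := by
  rw [pow_two, ENNReal.ofReal_mul (GP_nonneg _ _ _ _), ofReal_GP hτ0 hL0,
    tsum_mul_tsum_ennreal]
  refine tsum_congr fun nm => ?_
  rw [← ENNReal.ofReal_mul (p_nonneg _ _)]
  congr 1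
  have h := p_mul_p hτ0 (x - y + (nm.1:ℝ)*L) (((nm.2:ℝ) - (nm.1:ℝ))*L)
  rw [show x - y + (nm.2:ℝ)*L = (x - y + (nm.1:ℝ)*L) + ((nm.2:ℝ)-(nm.1:ℝ))*L by ring, h]
  push_cast
  ring_nf

lemma L4 {t s L T : ℝ} (ht0 : 0 < t) (htT : t ≤ T) (hs0 : 0 < s) (hsT : s ≤ T)
    (hL : 1 ≤ L) (K : ℝ) (hK0 : 0 ≤ K) (q : ℤ → ℝ) (hq0 : ∀ v, 0 ≤ q v) :
    (∑' mab : ℤ × ℤ × ℤ, ENNReal.ofReal (K *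
        (Real.exp (-((mab.1:ℝ)*L)^2/(4*t)) *
         Real.exp (-(((mab.2.2 - mab.2.1 : ℤ):ℝ)*L)^2/(4*s))) *
        q (mab.1 + mab.2.1 + mab.2.2)))
      ≤ ENNReal.ofReal (theta (1/(2*T*π))) *
        ∑' nm : ℤ × ℤ, ENNReal.ofReal (K *
          Real.exp (-(((nm.2 - nm.1 : ℤ):ℝ)*L)^2/(4*(t+s))) * q (nm.1 + nm.2)) := by
  have hT : 0 < T := lt_of_lt_of_le ht0 htT
  have hτ0 : 0 < t + s := by positivity
  have hL0 : 0 < L := lt_of_lt_of_le one_pos hL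
  set Θ := ENNReal.ofReal (theta (1/(2*T*π))) with hΘ
  set c : ℝ := (t+s)*L^2/(4*s*t) with hc
  have hc0 : 0 < c := by rw [hc]; positivity
  have hcT : (2*T)⁻¹ ≤ c := by
    have h1 : 1 ≤ L^2 := by nlinarith
    have h2 : (2*T)⁻¹ ≤ (t+s)/(4*s*t) := by
      rw [inv_eq_one_div, div_le_div_iff₀ (by positivity) (by positivity)]
      nlinarith
    have h3 : (t+s)/(4*s*t) ≤ (t+s)*L^2/(4*s*t) := by
      rw [div_le_div_iff₀ (by positivity) (by positivity)]
      nlinarith [mul_pos (mul_pos hs0 ht0) hτ0]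
    exact h2.trans (h3.trans_eq hc.symm)
  rw [← eL.tsum_eq, ENNReal.tsum_prod']
  rw [← eR.tsum_eq, ENNReal.tsum_prod', ← ENNReal.tsum_mul_left]
  refine ENNReal.tsum_le_tsum fun v => ?_
  simp only [eL, eR, Equiv.coe_fn_mk]
  simp only [show ∀ b : ℤ × ℤ, b.1 + b.2 + (v - b.1 - b.2) = v from fun b => by ring,
             show ∀ b : ℤ × ℤ, (v - b.1 - b.2) - b.2 = v - b.1 - 2*b.2 from fun b => by ring,
             show ∀ n : ℤ, (v - n) - n = v - 2*n from fun n => by ring,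
             show ∀ n : ℤ, n + (v - n) = v from fun n => by ring]
  rw [ENNReal.tsum_prod', ENNReal.tsum_comm, ← ENNReal.tsum_mul_left]
  refine ENNReal.tsum_le_tsum fun a => ?_
  set W : ℝ := ((v - 2*a : ℤ) : ℝ) with hW
  set φ : ℝ := -(W * t / (t + s)) with hφ
  set R : ℝ := K * Real.exp (-(W * L) ^ 2 / (4 * (t + s))) * q v with hR
  have hR0 : 0 ≤ R := mul_nonneg (mul_nonneg hK0 (Real.exp_pos _).le) (hq0 v)
  have hexp2 : ∀ M Wr : ℝ, Real.exp (-(M*L)^2/(4*t)) * Real.exp (-((Wr - M)*L)^2/(4*s))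
      = Real.exp (-c*(M + -(Wr * t / (t+s)))^2) * Real.exp (-(Wr*L)^2/(4*(t+s))) := by
    intro M Wr
    rw [← Real.exp_add, ← Real.exp_add]
    congr 1
    rw [hc]
    field_simp
    ring
  have hterm : ∀ m : ℤ, K * (Real.exp (-((m:ℝ)*L)^2/(4*t)) *
      Real.exp (-(((v - m - 2*a : ℤ):ℝ)*L)^2/(4*s))) * q v
      = Real.exp (-c*((m:ℝ) + φ)^2) * R := by
    intro m
    have hcast : ((v - m - 2*a : ℤ):ℝ) = W - (m:ℝ) := by rw [hW]; push_cast; ring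
    rw [hcast, hexp2 (m:ℝ) W, hR, hφ]
    ring
  calc ∑' (m : ℤ), ENNReal.ofReal (K * (Real.exp (-(((m,a).1:ℝ)*L)^2/(4*t)) *
          Real.exp (-(((v - (m,a).1 - 2*(m,a).2 : ℤ):ℝ)*L)^2/(4*s))) * q v)
      = ∑' (m : ℤ), ENNReal.ofReal (Real.exp (-c*((m:ℝ) + φ)^2)) * ENNReal.ofReal R := by
        refine tsum_congr fun m => ?_
        rw [← ENNReal.ofReal_mul (Real.exp_pos _).le]
        exact congrArg ENNReal.ofReal (hterm m)
    _ = ENNReal.ofReal (∑' (m : ℤ), Real.exp (-c*((m:ℝ) + φ)^2)) * ENNReal.ofReal R := by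
        rw [ENNReal.tsum_mul_right,
          ENNReal.ofReal_tsum_of_nonneg (fun m => (Real.exp_pos _).le) (summable_gauss' hc0 φ)]
    _ ≤ ENNReal.ofReal (theta (1/(2*T*π))) * ENNReal.ofReal R :=
        mul_le_mul_left (ENNReal.ofReal_le_ofReal (theta_bound hT hcT φ)) _
    _ = Θ * ENNReal.ofReal (K * Real.exp (-(W * L) ^ 2 / (4 * (t + s))) * q v) := by
        rw [hΘ, hR]

end Aux

theorem periodic_square_subsemigroup (T L : ℝ) (hT : 0 < T) (hL : 1 ≤ L)
    (s t : ℝ) (hs : s ∈ Set.Ioc 0 T) (ht : t ∈ Set.Ioc 0 T)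
    (x y : ℝ) (hx : x ∈ Set.Icc 0 L) (hy : y ∈ Set.Icc 0 L) :
    ∫ z in (0 : ℝ)..L, (GP L t x z) ^ 2 * (GP L s z y) ^ 2
      ≤ Real.sqrt ((t + s) / (4 * Real.pi * s * t)) * theta (1 / (2 * T * Real.pi)) *
        (GP L (t + s) x y) ^ 2 := by
  obtain ⟨ht0, htT⟩ := ht
  obtain ⟨hs0, hsT⟩ := hs
  have hL0 : 0 < L := lt_of_lt_of_le one_pos hL
  have hτ0 : 0 < t + s := by positivity
  have hπ := Real.pi_pos
  have hθ0 : 0 ≤ theta (1/(2*T*π)) := tsum_nonneg fun n => (Real.exp_pos _).le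
  have hRHS0 : 0 ≤ Real.sqrt ((t+s)/(4*π*s*t)) * theta (1/(2*T*π)) * (GP L (t+s) x y)^2 :=
    mul_nonneg (mul_nonneg (Real.sqrt_nonneg _) hθ0) (sq_nonneg _)
  have m1 : Measurable fun z : ℝ => GP L t x z := by
    have he : (fun z : ℝ => GP L t x z)
        = fun z => (∑' n : ℤ, ENNReal.ofReal (p t (x - z + n*L))).toReal := by
      funext z
      rw [← ofReal_GP ht0 hL0, ENNReal.toReal_ofReal (GP_nonneg _ _ _ _)]
    rw [he]
    exact (Measurable.ennreal_tsum fun n =>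
      ((continuous_p t).comp (by continuity)).measurable.ennreal_ofReal).ennreal_toReal
  have m2 : Measurable fun z : ℝ => GP L s z y := by
    have he : (fun z : ℝ => GP L s z y)
        = fun z => (∑' n : ℤ, ENNReal.ofReal (p s (z - y + n*L))).toReal := by
      funext z
      rw [← ofReal_GP hs0 hL0, ENNReal.toReal_ofReal (GP_nonneg _ _ _ _)]
    rw [he]
    exact (Measurable.ennreal_tsum fun n =>
      ((continuous_p s).comp (by continuity)).measurable.ennreal_ofReal).ennreal_toReal
  have hmeas : Measurable fun z : ℝ => (GP L t x z)^2 * (GP L s z y)^2 :=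
    (m1.pow_const 2).mul (m2.pow_const 2)
  rw [intervalIntegral.integral_of_le hL0.le]
  rw [MeasureTheory.integral_eq_lintegral_of_nonneg_ae
    (Filter.Eventually.of_forall fun z => mul_nonneg (sq_nonneg _) (sq_nonneg _))
    hmeas.aestronglyMeasurable]
  apply ENNReal.toReal_le_of_le_ofReal hRHS0
  rw [L1 ht0 hs0 hL0 x y]
  rw [tsum_congr (fun mab : ℤ × ℤ × ℤ => L2 ht0 hs0 x y mab.1 mab.2.1 mab.2.2)]
  rw [ENNReal.ofReal_mul (mul_nonneg (Real.sqrt_nonneg _) hθ0),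
      ENNReal.ofReal_mul (Real.sqrt_nonneg _)]
  rw [L3 hτ0 hL0 x y]
  have hKconst : Real.sqrt ((t+s)/(4*π*s*t)) * (Real.sqrt (4*π*(t+s)))⁻¹
      = (Real.sqrt (4*π*t))⁻¹ * (Real.sqrt (4*π*s))⁻¹ := by
    rw [← Real.sqrt_inv, ← Real.sqrt_inv, ← Real.sqrt_inv,
        ← Real.sqrt_mul (by positivity), ← Real.sqrt_mul (by positivity)]
    congr 1
    field_simp
  have hmerge : ENNReal.ofReal (Real.sqrt ((t+s)/(4*π*s*t)))
      * ENNReal.ofReal (theta (1/(2*T*π)))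
      * ∑' nm : ℤ × ℤ, ENNReal.ofReal ((Real.sqrt (4*π*(t+s)))⁻¹ *
          Real.exp (-(((nm.2 - nm.1 : ℤ):ℝ)*L)^2/(4*(t+s))) *
          p ((t+s)/2) ((x - y) + ((nm.1 + nm.2 : ℤ):ℝ)*(L/2)))
      = ENNReal.ofReal (theta (1/(2*T*π))) *
        ∑' nm : ℤ × ℤ, ENNReal.ofReal (((Real.sqrt (4*π*t))⁻¹ * (Real.sqrt (4*π*s))⁻¹) *
          Real.exp (-(((nm.2 - nm.1 : ℤ):ℝ)*L)^2/(4*(t+s))) *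
          p ((t+s)/2) ((x - y) + ((nm.1 + nm.2 : ℤ):ℝ)*(L/2))) := by
    rw [mul_comm (ENNReal.ofReal (Real.sqrt ((t+s)/(4*π*s*t)))) (ENNReal.ofReal (theta (1/(2*T*π)))),
        mul_assoc, ← ENNReal.tsum_mul_left]
    congr 1
    refine tsum_congr fun nm => ?_
    rw [← ENNReal.ofReal_mul (Real.sqrt_nonneg _)]
    congr 1
    rw [← hKconst]
    ring
  rw [hmerge]
  exact L4 ht0 htT hs0 hsT hL ((Real.sqrt (4*π*t))⁻¹ * (Real.sqrt (4*π*s))⁻¹)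
    (by positivity) (fun v => p ((t+s)/2) ((x - y) + (v:ℝ)*(L/2))) (fun v => p_nonneg _ _)
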